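/- For each k ∈ (1/2,1], there exists φ* ∈ Φ such that J_k(φ*) ≥ J_k(φ) for all φ ∈ Φ; that is, the upstream actor's reduced problem of maximizing J_k over Φ admits a solution. -/

import Mathlib

open MeasureTheory Set Filter

namespace Screening

/-- Assumption 1 on the cost function. -/
structure Assumption1 (c : ℝ → ℝ) (Qbar qbar : ℝ) : Prop where
  contDiff2 : ContDiffOn ℝ 2 c (Set.Ioi 0)
  strictMono : StrictMonoOn c (Set.Ici 0)
  strictConvex : StrictConvexOn ℝ (Set.Ici 0) c
  zero_val : c 0 = 0
  deriv_zero : derivWithin c (Set.Ici 0) 0 = 0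
  Qbar_pos : 0 < Qbar
  second_deriv_pos : ∀ x ∈ Set.Ioc (0:ℝ) Qbar, 0 < deriv (deriv c) x
  qbar_pos : 0 < qbar
  qbar_lt_Qbar : qbar < Qbar
  deriv_qbar : deriv c qbar = 1

/-- Assumption 2 (curvature condition). -/
structure Assumption2 (c : ℝ → ℝ) (qbar : ℝ) : Prop where
  contDiff3 : ContDiffOn ℝ 3 c (Set.Ioi 0)
  curvature : ∀ x ∈ Set.Ioc (0:ℝ) qbar,
    -x * deriv (deriv (deriv c)) x / deriv (deriv c) x < 2

/-- `q` is the (unique) pointwise maximizer of `x ↦ z·x − c x` over `[0, qbar]`. -/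
def IsArgmaxSelection (c : ℝ → ℝ) (qbar : ℝ) (q : ℝ → ℝ) : Prop :=
  ∀ z : ℝ, q z ∈ Set.Icc (0:ℝ) qbar ∧
    ∀ x ∈ Set.Icc (0:ℝ) qbar, z * x - c x ≤ z * q z - c (q z)

/-- Indirect profit `π(z) = z·q(z) − c(q(z))`. -/
noncomputable def piFun (c q : ℝ → ℝ) (z : ℝ) : ℝ := z * q z - c (q z)

/-- Membership in Φ: nondecreasing, `[0,1]`-valued, right-continuous on `[0,1)`. -/
def MemPhi (φ : ℝ → ℝ) : Prop :=
  (∀ u ∈ Set.Icc (0:ℝ) 1, φ u ∈ Set.Icc (0:ℝ) 1) ∧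
  MonotoneOn φ (Set.Icc (0:ℝ) 1) ∧
  ∀ u ∈ Set.Ico (0:ℝ) 1, ContinuousWithinAt φ (Set.Ici u) u

/-- The induced quantile `Q_φ`. -/
noncomputable def Qfun (φ : ℝ → ℝ) (u : ℝ) : ℝ :=
  if u < 1 then (∫ t in u..1, φ t) / (1 - u)
  else limUnder (nhdsWithin 1 (Set.Iio 1))
    (fun v => (∫ t in v..1, φ t) / (1 - v))

/-- Seller profit `Π(φ)`. -/
noncomputable def Profit (c q φ : ℝ → ℝ) : ℝ := ∫ u in (0:ℝ)..1, piFun c q (φ u)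

/-- Consumer surplus `CS(φ)`. -/
noncomputable def CS (q φ : ℝ → ℝ) : ℝ :=
  ∫ u in (0:ℝ)..1, (Qfun φ u - φ u) * q (φ u)

/-- Weighted objective `J_k(φ)`. -/
noncomputable def Jfun (c q : ℝ → ℝ) (k : ℝ) (φ : ℝ → ℝ) : ℝ :=
  k * CS q φ + (1 - k) * Profit c q φ

/-- Cumulative spillover `A_φ(u)`. -/
noncomputable def Afun (q φ : ℝ → ℝ) (u : ℝ) : ℝ :=
  ∫ s in (0:ℝ)..u, q (φ s) / (1 - s)

/-- `q'(z) = 1 / c''(q(z))`. -/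
noncomputable def qprime (c q : ℝ → ℝ) (z : ℝ) : ℝ := (deriv (deriv c) (q z))⁻¹

/-- First-variation density `H_k[φ](u)`. -/
noncomputable def Hfun (c q : ℝ → ℝ) (k : ℝ) (φ : ℝ → ℝ) (u : ℝ) : ℝ :=
  k * Afun q φ u + k * (Qfun φ u - φ u) * qprime c q (φ u) + (1 - 2*k) * q (φ u)


variable {c : ℝ → ℝ} {Qbar qbar : ℝ} {q : ℝ → ℝ}

lemma c_nonneg (hA1 : Assumption1 c Qbar qbar) {y : ℝ} (hy : 0 ≤ y) : 0 ≤ c y := by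
  rcases eq_or_lt_of_le hy with rfl | hy0
  · rw [hA1.zero_val]
  · have := hA1.strictMono (self_mem_Ici) (le_of_lt hy0 : (0:ℝ) ≤ y) hy0
    rw [hA1.zero_val] at this; exact this.le

lemma c_upper (hA1 : Assumption1 c Qbar qbar) {y : ℝ} (hy : y ∈ Icc 0 qbar) :
    c y ≤ y * (c qbar / qbar) := by
  have hqb := hA1.qbar_pos
  set t := y / qbar with ht
  have ht0 : 0 ≤ t := div_nonneg hy.1 hqb.le
  have ht1 : t ≤ 1 := (div_le_one hqb).2 hy.2
  have hcomb := hA1.strictConvex.convexOn.2 (self_mem_Ici : (0:ℝ) ∈ Ici 0)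
    (le_of_lt hqb : (0:ℝ) ≤ qbar) (by linarith : (0:ℝ) ≤ 1 - t) ht0 (by ring)
  have hyy : (1 - t) • (0:ℝ) + t • qbar = y := by
    rw [smul_eq_mul, smul_eq_mul, mul_zero, zero_add, ht]; exact div_mul_cancel₀ y hqb.ne'
  rw [hyy, hA1.zero_val] at hcomb
  have : t * c qbar = y * (c qbar / qbar) := by rw [ht]; ring
  simpa [smul_eq_mul, this] using hcomb

lemma c_cont (hA1 : Assumption1 c Qbar qbar) : ContinuousOn c (Icc 0 qbar) := by
  intro x hx
  rcases eq_or_lt_of_le hx.1 with h0 | h0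
  · subst h0
    rw [ContinuousWithinAt, hA1.zero_val]
    apply squeeze_zero'
    · exact eventually_mem_nhdsWithin.mono (fun y hy => c_nonneg hA1 hy.1)
    · exact eventually_mem_nhdsWithin.mono (fun y hy => c_upper hA1 hy)
    · have h : Tendsto (fun y : ℝ => y * (c qbar / qbar)) (nhds 0) (nhds 0) := by
        simpa using ((continuous_id.mul_const (c qbar / qbar)).tendsto (0:ℝ))
      exact h.mono_left nhdsWithin_le_nhds
  · exact ((hA1.contDiff2.continuousOn.continuousAt (Ioi_mem_nhds h0))).continuousWithinAt

lemma q_mem (hq : IsArgmaxSelection c qbar q) (z : ℝ) : q z ∈ Icc 0 qbar := (hq z).1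

lemma argmax_unique (hA1 : Assumption1 c Qbar qbar) (hq : IsArgmaxSelection c qbar q)
    {z x : ℝ} (hx : x ∈ Icc 0 qbar)
    (hmax : ∀ y ∈ Icc (0:ℝ) qbar, z * y - c y ≤ z * x - c x) : x = q z := by
  by_contra hne
  have hqz := (hq z).1
  have h1 : z * x - c x = z * q z - c (q z) :=
    le_antisymm ((hq z).2 x hx) (hmax _ hqz)
  have hm : (1/2 : ℝ) • x + (1/2 : ℝ) • q z ∈ Icc (0:ℝ) qbar := by
    constructor
    · simp only [smul_eq_mul]; nlinarith [hx.1, hqz.1]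
    · simp only [smul_eq_mul]; nlinarith [hx.2, hqz.2]
  have hconv := hA1.strictConvex.2 (hx.1 : x ∈ Ici 0) (hqz.1 : q z ∈ Ici 0) hne
    (by norm_num : (0:ℝ) < 1/2) (by norm_num : (0:ℝ) < 1/2) (by norm_num)
  have hle := (hq z).2 _ hm
  simp only [smul_eq_mul] at hconv hle
  nlinarith

lemma q_mono (hq : IsArgmaxSelection c qbar q) : Monotone q := by
  intro z z' hzz
  rcases eq_or_lt_of_le hzz with rfl | hlt
  · exact le_rfl
  have h1 := (hq z).2 (q z') (hq z').1
  have h2 := (hq z').2 (q z) (hq z).1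
  nlinarith

lemma q_cont (hA1 : Assumption1 c Qbar qbar) (hq : IsArgmaxSelection c qbar q) :
    Continuous q := by
  have hc := c_cont hA1
  rw [continuous_iff_continuousAt]
  intro z
  rw [ContinuousAt, tendsto_iff_seq_tendsto]
  intro x hx
  apply tendsto_of_subseq_tendsto
  intro ns hns
  obtain ⟨L, hL, ms, hms, hconv⟩ := (isCompact_Icc (a := (0:ℝ)) (b := qbar)).tendsto_subseq
    (fun n => (hq (x (ns n))).1)
  refine ⟨ms, ?_⟩
  have hzc : Tendsto (fun n => x (ns (ms n))) atTop (nhds z) :=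
    hx.comp (hns.comp hms.tendsto_atTop)
  have hcL : Tendsto (fun n => c (q (x (ns (ms n))))) atTop (nhds (c L)) := by
    have hwithin : Tendsto (fun n => q (x (ns (ms n)))) atTop (nhds L ⊓ Filter.principal (Icc 0 qbar)) := by
      apply tendsto_inf.2 ⟨hconv, tendsto_principal.2 (Eventually.of_forall (fun n => (hq _).1))⟩
    exact ((hc L hL).tendsto).comp hwithin
  have hkey : L = q z := by
    apply argmax_unique hA1 hq hL
    intro y hy
    have hle : ∀ n, x (ns (ms n)) * y - c y ≤ x (ns (ms n)) * q (x (ns (ms n))) - c (q (x (ns (ms n)))) :=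
      fun n => (hq (x (ns (ms n)))).2 y hy
    exact le_of_tendsto_of_tendsto' ((hzc.mul_const y).sub tendsto_const_nhds)
      ((hzc.mul hconv).sub hcL) hle
  exact hkey ▸ hconv

lemma pi_mono (hq : IsArgmaxSelection c qbar q) : Monotone (piFun c q) := by
  intro z z' hzz
  unfold piFun
  have h1 : z * q z ≤ z' * q z := mul_le_mul_of_nonneg_right hzz (hq z).1.1
  have h2 := (hq z').2 (q z) (hq z).1
  linarith

lemma pi_nonneg (hA1 : Assumption1 c Qbar qbar) (hq : IsArgmaxSelection c qbar q)
    {z : ℝ} (hz : 0 ≤ z) : 0 ≤ piFun c q z := by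
  have := (hq z).2 0 ⟨le_rfl, hA1.qbar_pos.le⟩
  unfold piFun
  rw [hA1.zero_val] at this
  linarith

lemma pi_cont (hA1 : Assumption1 c Qbar qbar) (hq : IsArgmaxSelection c qbar q) :
    Continuous (piFun c q) := by
  have hqc := q_cont hA1 hq
  have : Continuous (fun z => c (q z)) :=
    (c_cont hA1).comp_continuous hqc (fun z => (hq z).1)
  exact (continuous_id.mul hqc).sub this

lemma pi_bound (hA1 : Assumption1 c Qbar qbar) (hq : IsArgmaxSelection c qbar q)
    {z : ℝ} (hz : z ∈ Icc (0:ℝ) 1) : |piFun c q z| ≤ piFun c q 1 := by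
  have h0 := pi_nonneg hA1 hq hz.1
  have h1 := pi_mono hq hz.2
  rw [abs_le]
  constructor <;> linarith [pi_nonneg hA1 hq (le_refl (0:ℝ)), pi_mono hq hz.1]


variable {c : ℝ → ℝ} {Qbar qbar : ℝ} {q : ℝ → ℝ}

/-- The integrand for `CS` written via a globally monotone representative. -/
noncomputable def Gfun (q ψ : ℝ → ℝ) (u : ℝ) : ℝ :=
  ((∫ t in u..1, ψ t) / (1 - u) - ψ u) * q (ψ u)

lemma psi_intervalIntegrable {ψ : ℝ → ℝ} (hψm : Monotone ψ) (a b : ℝ) :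
    IntervalIntegrable ψ volume a b :=
  (hψm.monotoneOn _).intervalIntegrable

lemma integ_nonneg {ψ : ℝ → ℝ} (hψb : ∀ t, ψ t ∈ Icc (0:ℝ) 1) {u : ℝ} (hu : u ≤ 1) :
    0 ≤ ∫ t in u..1, ψ t :=
  intervalIntegral.integral_nonneg hu (fun t _ => (hψb t).1)

lemma integ_le {ψ : ℝ → ℝ} (hψm : Monotone ψ) (hψb : ∀ t, ψ t ∈ Icc (0:ℝ) 1)
    {u : ℝ} (hu : u ≤ 1) : (∫ t in u..1, ψ t) ≤ 1 - u := by
  have h := intervalIntegral.integral_mono_on hu (psi_intervalIntegrable hψm u 1)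
    (intervalIntegrable_const (c := (1:ℝ))) (fun t _ => (hψb t).2)
  simpa using h

lemma G_bound (hq : IsArgmaxSelection c qbar q) {ψ : ℝ → ℝ}
    (hψm : Monotone ψ) (hψb : ∀ t, ψ t ∈ Icc (0:ℝ) 1) {u : ℝ} (hu : u ∈ Ioo (0:ℝ) 1) :
    ‖Gfun q ψ u‖ ≤ qbar := by
  have h1u : (0:ℝ) < 1 - u := by linarith [hu.2]
  have hi0 := integ_nonneg hψb hu.2.le
  have hi1 := integ_le hψm hψb hu.2.le
  have ha : (∫ t in u..1, ψ t) / (1 - u) ∈ Icc (0:ℝ) 1 :=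
    ⟨div_nonneg hi0 h1u.le, by rw [div_le_one h1u]; linarith⟩
  have hb := hψb u
  have habs : |(∫ t in u..1, ψ t) / (1 - u) - ψ u| ≤ 1 := by
    rw [abs_le]; constructor <;> [linarith [ha.1, hb.2]; linarith [ha.2, hb.1]]
  have h0q : (0:ℝ) ≤ qbar := le_trans (hq 0).1.1 (hq 0).1.2
  have hqb : |q (ψ u)| ≤ qbar := by
    rw [abs_le]; exact ⟨by linarith [(hq (ψ u)).1.1], (hq (ψ u)).1.2⟩
  calc ‖Gfun q ψ u‖ = |(∫ t in u..1, ψ t) / (1 - u) - ψ u| * |q (ψ u)| := by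
        rw [Real.norm_eq_abs, Gfun, abs_mul]
    _ ≤ 1 * qbar := by
        apply mul_le_mul habs hqb (abs_nonneg _) zero_le_one
    _ = qbar := one_mul _

lemma primitive_cont {ψ : ℝ → ℝ} (hψm : Monotone ψ) :
    Continuous (fun u => ∫ t in u..1, ψ t) := by
  have h : (fun u => ∫ t in u..1, ψ t)
      = fun u => (∫ t in (0:ℝ)..1, ψ t) - ∫ t in (0:ℝ)..u, ψ t := by
    funext u
    rw [eq_sub_iff_add_eq, add_comm,
      intervalIntegral.integral_add_adjacent_intervals (psi_intervalIntegrable hψm 0 u)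
        (psi_intervalIntegrable hψm u 1)]
  rw [h]
  exact continuous_const.sub
    (intervalIntegral.continuous_primitive (fun a b => psi_intervalIntegrable hψm a b) 0)

lemma G_meas (hA1 : Assumption1 c Qbar qbar) (hq : IsArgmaxSelection c qbar q)
    {ψ : ℝ → ℝ} (hψm : Monotone ψ) : Measurable (Gfun q ψ) := by
  have h1 : Measurable ψ := hψm.measurable
  have h2 : Measurable (fun u => ∫ t in u..1, ψ t) := (primitive_cont hψm).measurable
  exact ((h2.div (measurable_const.sub measurable_id)).sub h1).mul
    ((q_cont hA1 hq).measurable.comp h1)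

lemma CS_rep (hq : IsArgmaxSelection c qbar q) {ψ φ : ℝ → ℝ}
    (hEq : EqOn φ ψ (Icc 0 1)) :
    CS q φ = ∫ u in Ioo (0:ℝ) 1, Gfun q ψ u := by
  rw [CS, intervalIntegral.integral_of_le zero_le_one, integral_Ioc_eq_integral_Ioo]
  apply setIntegral_congr_fun measurableSet_Ioo
  intro u hu
  have hu1 : u ∈ Icc (0:ℝ) 1 := ⟨hu.1.le, hu.2.le⟩
  have hphi : φ u = ψ u := hEq hu1
  have hint : (∫ t in u..1, φ t) = ∫ t in u..1, ψ t := by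
    apply intervalIntegral.integral_congr
    rw [uIcc_of_le hu.2.le]
    exact fun t ht => hEq (Icc_subset_Icc hu.1.le le_rfl ht)
  simp only [Qfun, if_pos hu.2, Gfun, hphi, hint]

lemma Profit_rep {ψ φ : ℝ → ℝ} (hEq : EqOn φ ψ (Icc 0 1)) :
    Profit c q φ = ∫ u in Ioo (0:ℝ) 1, piFun c q (ψ u) := by
  rw [Profit, intervalIntegral.integral_of_le zero_le_one, integral_Ioc_eq_integral_Ioo]
  apply setIntegral_congr_fun measurableSet_Ioo
  intro u hu
  show piFun c q (φ u) = piFun c q (ψ u)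
  rw [hEq ⟨hu.1.le, hu.2.le⟩]

instance : IsFiniteMeasure (volume.restrict (Ioo (0:ℝ) 1)) := by
  constructor
  rw [Measure.restrict_apply_univ, Real.volume_Ioo]
  exact ENNReal.ofReal_lt_top

lemma measure_Ioo_01 : ((volume.restrict (Ioo (0:ℝ) 1)) univ).toReal = 1 := by
  rw [Measure.restrict_apply_univ, Real.volume_Ioo]
  norm_num

lemma J_le (hA1 : Assumption1 c Qbar qbar) (hq : IsArgmaxSelection c qbar q)
    {k : ℝ} (hk : k ∈ Set.Ioc (1/2 : ℝ) 1) {ψ φ : ℝ → ℝ}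
    (hψm : Monotone ψ) (hψb : ∀ t, ψ t ∈ Icc (0:ℝ) 1) (hEq : EqOn φ ψ (Icc 0 1)) :
    Jfun c q k φ ≤ k * qbar + (1 - k) * piFun c q 1 := by
  have hCS : CS q φ ≤ qbar := by
    rw [CS_rep hq hEq]
    calc (∫ u in Ioo (0:ℝ) 1, Gfun q ψ u) ≤ ‖∫ u in Ioo (0:ℝ) 1, Gfun q ψ u‖ :=
          le_abs_self _
      _ ≤ qbar * ((volume.restrict (Ioo (0:ℝ) 1)) univ).toReal :=
          norm_integral_le_of_norm_le_const ((ae_restrict_mem measurableSet_Ioo).mono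
            (fun u hu => G_bound hq hψm hψb hu))
      _ = qbar := by rw [measure_Ioo_01, mul_one]
  have hP : Profit c q φ ≤ piFun c q 1 := by
    rw [Profit_rep hEq]
    calc (∫ u in Ioo (0:ℝ) 1, piFun c q (ψ u)) ≤ ‖∫ u in Ioo (0:ℝ) 1, piFun c q (ψ u)‖ :=
          le_abs_self _
      _ ≤ piFun c q 1 * ((volume.restrict (Ioo (0:ℝ) 1)) univ).toReal :=
          norm_integral_le_of_norm_le_const
            (Eventually.of_forall (fun u => pi_bound hA1 hq (hψb u)))
      _ = piFun c q 1 := by rw [measure_Ioo_01, mul_one]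
  have hk0 : 0 ≤ k := by linarith [hk.1]
  have hk1 : 0 ≤ 1 - k := by linarith [hk.2]
  unfold Jfun
  have := mul_le_mul_of_nonneg_left hCS hk0
  have := mul_le_mul_of_nonneg_left hP hk1
  linarith

lemma J_tendsto (hA1 : Assumption1 c Qbar qbar) (hq : IsArgmaxSelection c qbar q) (k : ℝ)
    {ψn : ℕ → ℝ → ℝ} {ψ : ℝ → ℝ}
    (hmn : ∀ n, Monotone (ψn n)) (hbn : ∀ n t, ψn n t ∈ Icc (0:ℝ) 1)
    (hψm : Monotone ψ) (hψb : ∀ t, ψ t ∈ Icc (0:ℝ) 1)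
    {D : Set ℝ} (hD : volume D = 0)
    (hconv : ∀ t ∈ Ioo (0:ℝ) 1, t ∉ D → Tendsto (fun n => ψn n t) atTop (nhds (ψ t)))
    {φn : ℕ → ℝ → ℝ} {φ : ℝ → ℝ}
    (hEqn : ∀ n, EqOn (φn n) (ψn n) (Icc 0 1)) (hEq : EqOn φ ψ (Icc 0 1)) :
    Tendsto (fun n => Jfun c q k (φn n)) atTop (nhds (Jfun c q k φ)) := by
  have hDae : ∀ᵐ t ∂volume, t ∉ D := measure_eq_zero_iff_ae_notMem.1 hD
  -- key pointwise convergence of integrals over tails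
  have htail : ∀ u ∈ Ioo (0:ℝ) 1,
      Tendsto (fun n => ∫ t in u..1, ψn n t) atTop (nhds (∫ t in u..1, ψ t)) := by
    intro u hu
    have hle := hu.2.le
    simp only [intervalIntegral.integral_of_le hle]
    apply tendsto_integral_of_dominated_convergence (fun _ => (1:ℝ))
    · exact fun n => ((hmn n).measurable.aestronglyMeasurable)
    · exact integrable_const 1
    · intro n
      apply Eventually.of_forall
      intro t
      rw [Real.norm_eq_abs, abs_le]
      exact ⟨by linarith [(hbn n t).1], (hbn n t).2⟩
    · have h1 : ∀ᵐ t ∂(volume : Measure ℝ), t ∉ ({1} : Set ℝ) :=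
        measure_eq_zero_iff_ae_notMem.1 (measure_singleton 1)
      filter_upwards [ae_restrict_mem measurableSet_Ioc, ae_restrict_of_ae hDae,
        ae_restrict_of_ae h1] with t ht htD ht1
      have htm : t ∈ Ioo (0:ℝ) 1 :=
        ⟨lt_trans hu.1 ht.1, lt_of_le_of_ne ht.2 (by simpa using ht1)⟩
      exact hconv t htm htD
  have hCS : Tendsto (fun n => CS q (φn n)) atTop (nhds (CS q φ)) := by
    have rwn : (fun n => CS q (φn n)) = fun n => ∫ u in Ioo (0:ℝ) 1, Gfun q (ψn n) u :=
      funext fun n => CS_rep hq (hEqn n)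
    rw [rwn, CS_rep hq hEq]
    apply tendsto_integral_of_dominated_convergence (fun _ => qbar)
    · exact fun n => (G_meas hA1 hq (hmn n)).aestronglyMeasurable
    · exact integrable_const _
    · intro n
      exact (ae_restrict_mem measurableSet_Ioo).mono
        (fun u hu => G_bound hq (hmn n) (hbn n) hu)
    · filter_upwards [ae_restrict_mem measurableSet_Ioo, ae_restrict_of_ae hDae]
        with u hu huD
      have h1 := htail u hu
      have h2 := hconv u hu huD
      have h3 : Tendsto (fun n => q (ψn n u)) atTop (nhds (q (ψ u))) :=
        ((q_cont hA1 hq).tendsto (ψ u)).comp h2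
      exact ((h1.div_const (1 - u)).sub h2).mul h3
  have hP : Tendsto (fun n => Profit c q (φn n)) atTop (nhds (Profit c q φ)) := by
    have rwn : (fun n => Profit c q (φn n)) = fun n => ∫ u in Ioo (0:ℝ) 1, piFun c q (ψn n u) :=
      funext fun n => Profit_rep (hEqn n)
    rw [rwn, Profit_rep hEq]
    apply tendsto_integral_of_dominated_convergence (fun _ => piFun c q 1)
    · exact fun n => ((pi_cont hA1 hq).measurable.comp (hmn n).measurable).aestronglyMeasurable
    · exact integrable_const _
    · intro n
      exact Eventually.of_forall (fun u => pi_bound hA1 hq (hbn n u))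
    · filter_upwards [ae_restrict_mem measurableSet_Ioo, ae_restrict_of_ae hDae]
        with u hu huD
      exact ((pi_cont hA1 hq).tendsto (ψ u)).comp (hconv u hu huD)
  unfold Jfun
  exact (hCS.const_mul k).add (hP.const_mul (1 - k))


/-- clamp to [0,1] -/
noncomputable def cl (t : ℝ) : ℝ := min (max t 0) 1

lemma cl_mem (t : ℝ) : cl t ∈ Icc (0:ℝ) 1 :=
  ⟨le_min (le_max_right t 0) zero_le_one, min_le_right _ _⟩

lemma cl_eq {t : ℝ} (ht : t ∈ Icc (0:ℝ) 1) : cl t = t := by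
  rw [cl, max_eq_left ht.1, min_eq_left ht.2]

lemma cl_mono : Monotone cl :=
  fun a b h => min_le_min (max_le_max h le_rfl) le_rfl

lemma bar_mono {φ : ℝ → ℝ} (hφ : MemPhi φ) : Monotone (fun t => φ (cl t)) :=
  fun a b h => hφ.2.1 (cl_mem a) (cl_mem b) (cl_mono h)

lemma bar_mem {φ : ℝ → ℝ} (hφ : MemPhi φ) : ∀ t, φ (cl t) ∈ Icc (0:ℝ) 1 :=
  fun t => hφ.1 _ (cl_mem t)

lemma bar_eqOn {φ : ℝ → ℝ} : EqOn φ (fun t => φ (cl t)) (Icc 0 1) :=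
  fun t ht => by simp only [cl_eq ht]

lemma memPhi_zero : MemPhi (fun _ => 0) :=
  ⟨fun u _ => ⟨le_rfl, zero_le_one⟩, fun a _ b _ _ => le_rfl,
    fun u _ => continuousWithinAt_const⟩


/-- For each `k ∈ (1/2,1]`, the upstream actor's reduced problem of
maximizing `J_k` over `Φ` admits a solution. -/
theorem maximizer_exists
    (c : ℝ → ℝ) (Qbar qbar : ℝ) (q : ℝ → ℝ)
    (hA1 : Assumption1 c Qbar qbar)
    (hq : IsArgmaxSelection c qbar q)
    (k : ℝ) (hk : k ∈ Set.Ioc (1/2 : ℝ) 1) :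
    ∃ φstar : ℝ → ℝ, MemPhi φstar ∧
      ∀ φ : ℝ → ℝ, MemPhi φ → Jfun c q k φ ≤ Jfun c q k φstar := by
  classical
  set Sset : Set ℝ := {x | ∃ φ, MemPhi φ ∧ Jfun c q k φ = x} with hSset
  have hne : Sset.Nonempty := ⟨Jfun c q k (fun _ => 0), (fun _ => 0), memPhi_zero, rfl⟩
  have hbdd : BddAbove Sset := by
    refine ⟨k * qbar + (1 - k) * piFun c q 1, ?_⟩
    rintro x ⟨φ, hφ, rfl⟩
    exact J_le hA1 hq hk (bar_mono hφ) (bar_mem hφ) bar_eqOn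
  set S := sSup Sset with hS
  -- maximizing sequence
  have hex : ∀ n : ℕ, ∃ φ, MemPhi φ ∧ S - 1/(n+1) < Jfun c q k φ := by
    intro n
    have hlt : S - 1/(n+1:ℝ) < S := by
      have : (0:ℝ) < 1/(n+1:ℝ) := by positivity
      linarith
    obtain ⟨x, hx, hxlt⟩ := exists_lt_of_lt_csSup hne hlt
    obtain ⟨φ, hφ, rfl⟩ := hx
    exact ⟨φ, hφ, hxlt⟩
  choose φn hφn hJn using hex
  have hJle : ∀ n, Jfun c q k (φn n) ≤ S := fun n => le_csSup hbdd ⟨φn n, hφn n, rfl⟩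
  have hJtend : Tendsto (fun n => Jfun c q k (φn n)) atTop (nhds S) := by
    apply tendsto_of_tendsto_of_tendsto_of_le_of_le
      (g := fun n : ℕ => S - 1/(n+1:ℝ)) (h := fun _ => S)
    · have h0 : Tendsto (fun n : ℕ => 1/(n+1:ℝ)) atTop (nhds 0) :=
        tendsto_one_div_add_atTop_nhds_zero_nat
      have := (tendsto_const_nhds (x := S) (f := atTop (α := ℕ))).sub h0
      simpa using this
    · exact tendsto_const_nhds
    · exact fun n => (hJn n).le
    · exact hJle
  -- rationals enumeration clamped to [0,1]
  obtain ⟨e, he⟩ := exists_surjective_nat ℚ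
  set r : ℕ → ℝ := fun n => cl ((e n : ℚ) : ℝ) with hr
  have hr_mem : ∀ n, r n ∈ Icc (0:ℝ) 1 := fun n => cl_mem _
  have hr_surj : ∀ v : ℚ, (v:ℝ) ∈ Icc (0:ℝ) 1 → ∃ n, r n = (v:ℝ) := by
    intro v hv
    obtain ⟨n, rfl⟩ := he v
    exact ⟨n, cl_eq hv⟩
  -- subsequence converging on all rationals
  set X := ℕ → Icc (0:ℝ) 1 with hX
  set xseq : ℕ → X := fun n i => ⟨φn n (r i), (hφn n).1 _ (hr_mem i)⟩ with hxseq
  obtain ⟨a, -, σ, hσ, hconvX⟩ :=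
    (isCompact_univ (X := X)).tendsto_subseq (x := xseq) (fun n => mem_univ _)
  set g : ℕ → ℝ := fun i => (a i : ℝ) with hg
  have hcoord : ∀ i, Tendsto (fun n => φn (σ n) (r i)) atTop (nhds (g i)) := by
    intro i
    have h1 := (tendsto_pi_nhds.1 hconvX) i
    exact ((continuous_subtype_val.tendsto (a i)).comp h1 : _)
  have hg_mem : ∀ i, g i ∈ Icc (0:ℝ) 1 := fun i => (a i).2
  have hg_mono : ∀ i j, r i ≤ r j → g i ≤ g j := by
    intro i j hij
    refine le_of_tendsto_of_tendsto' (hcoord i) (hcoord j) (fun n => ?_)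
    exact (hφn (σ n)).2.1 (hr_mem i) (hr_mem j) hij
  obtain ⟨i1, hi1⟩ := hr_surj 1 (by norm_num)
  rw [Rat.cast_one] at hi1
  -- the candidate maximizer
  set T : ℝ → Set ℝ := fun u => g '' {i | u < r i} with hT
  set φstar : ℝ → ℝ := fun u => if u < 1 then sInf (T u) else g i1 with hφstar
  have hT_ne : ∀ u, u < 1 → (T u).Nonempty :=
    fun u hu => ⟨g i1, i1, by rw [mem_setOf_eq, hi1]; exact hu, rfl⟩
  have hT_bdd : ∀ u, BddBelow (T u) := by
    intro u
    refine ⟨0, ?_⟩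
    rintro x ⟨i, -, rfl⟩
    exact (hg_mem i).1
  have P3 : ∀ i u, u < r i → φstar u ≤ g i := by
    intro i u h
    have hu1 : u < 1 := lt_of_lt_of_le h (hr_mem i).2
    rw [hφstar]; simp only [if_pos hu1]
    exact csInf_le (hT_bdd u) ⟨i, h, rfl⟩
  have P2 : ∀ i u, r i ≤ u → g i ≤ φstar u := by
    intro i u h
    rw [hφstar]
    by_cases hu1 : u < 1
    · simp only [if_pos hu1]
      apply le_csInf (hT_ne u hu1)
      rintro x ⟨j, hj, rfl⟩
      exact hg_mono i j (le_of_lt (lt_of_le_of_lt h hj))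
    · simp only [if_neg hu1]
      exact hg_mono i i1 (by rw [hi1]; exact (hr_mem i).2)
  have P0 : ∀ u, φstar u ∈ Icc (0:ℝ) 1 := by
    intro u
    by_cases hu1 : u < 1
    · constructor
      · rw [hφstar]; simp only [if_pos hu1]
        apply le_csInf (hT_ne u hu1)
        rintro x ⟨i, -, rfl⟩
        exact (hg_mem i).1
      · exact le_trans (P3 i1 u (by rw [hi1]; exact hu1)) (hg_mem i1).2
    · rw [hφstar]; simp only [if_neg hu1]
      exact hg_mem i1
  have P1 : Monotone φstar := by
    intro u v huv
    by_cases hv1 : v < 1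
    · have hu1 : u < 1 := lt_of_le_of_lt huv hv1
      rw [hφstar]; simp only [if_pos hu1, if_pos hv1]
      apply csInf_le_csInf (hT_bdd u) (hT_ne v hv1)
      rintro x ⟨i, hi, rfl⟩
      exact ⟨i, lt_of_le_of_lt huv hi, rfl⟩
    · by_cases hu1 : u < 1
      · have := P3 i1 u (by rw [hi1]; exact hu1)
        rw [hφstar] at this ⊢
        simpa [if_neg hv1] using this
      · rw [hφstar]; simp only [if_neg hu1, if_neg hv1]; exact le_rfl
  have P4 : ∀ u ∈ Ico (0:ℝ) 1, ContinuousWithinAt φstar (Ici u) u := by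
    intro u hu
    rw [Metric.continuousWithinAt_iff]
    intro ε hε
    have hfx : φstar u = sInf (T u) := by rw [hφstar]; simp only [if_pos hu.2]
    have hlt : sInf (T u) < φstar u + ε := by rw [← hfx]; linarith
    obtain ⟨x, ⟨i, hi, rfl⟩, hxlt⟩ := exists_lt_of_csInf_lt (hT_ne u hu.2) hlt
    refine ⟨r i - u, by simpa using hi, ?_⟩
    intro w hw hdist
    rw [Real.dist_eq] at hdist
    have hwu : u ≤ w := hw
    have hwlt : w < r i := by
      rw [abs_lt] at hdist
      linarith [hdist.2]
    have h1 : φstar w ≤ g i := P3 i w hwlt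
    have h2 : φstar u ≤ φstar w := P1 hwu
    rw [Real.dist_eq, abs_lt]
    constructor <;> linarith
  have hMem : MemPhi φstar := ⟨fun u _ => P0 u, P1.monotoneOn _, P4⟩
  -- convergence at continuity points
  have P5 : ∀ u ∈ Ioo (0:ℝ) 1, ContinuousAt φstar u →
      Tendsto (fun n => φn (σ n) u) atTop (nhds (φstar u)) := by
    intro u hu hcont
    rw [Metric.tendsto_atTop]
    intro ε hε
    have hε3 : 0 < ε/3 := by linarith
    obtain ⟨δ, hδ0, hδprop⟩ := Metric.continuousAt_iff.1 hcont (ε/3) hε3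
    set δ' := min δ (min u (1 - u)) with hδ'
    have hδ'0 : 0 < δ' := lt_min hδ0 (lt_min hu.1 (by linarith [hu.2]))
    have hδ'δ : δ' ≤ δ := min_le_left _ _
    have hδ'u : δ' ≤ u := le_trans (min_le_right _ _) (min_le_left _ _)
    have hδ'1u : δ' ≤ 1 - u := le_trans (min_le_right _ _) (min_le_right _ _)
    obtain ⟨v, hv1, hv2⟩ := exists_rat_btwn (by linarith : u - δ' < u)
    obtain ⟨v', hv'1, hv'2⟩ := exists_rat_btwn (by linarith : u < u + δ')
    have hvIcc : (v:ℝ) ∈ Icc (0:ℝ) 1 := ⟨by linarith, by linarith [hu.2]⟩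
    have hv'Icc : (v':ℝ) ∈ Icc (0:ℝ) 1 := ⟨by linarith [hu.1], by linarith⟩
    obtain ⟨i, hi⟩ := hr_surj v hvIcc
    obtain ⟨j, hj⟩ := hr_surj v' hv'Icc
    -- lower bound on g i
    have hgi : φstar u - ε/3 < g i := by
      set w := (u - δ' + (v:ℝ))/2 with hw
      have hw1 : u - δ' < w := by rw [hw]; linarith
      have hw2 : w < (v:ℝ) := by rw [hw]; linarith
      have hwr : w < r i := by rw [hi]; exact hw2
      have h1 : φstar w ≤ g i := P3 i w hwr
      have h2 : |φstar w - φstar u| < ε/3 := by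
        have := hδprop (x := w) (by rw [Real.dist_eq, abs_lt]; constructor <;> linarith)
        rwa [Real.dist_eq] at this
      rw [abs_lt] at h2
      linarith [h2.1]
    -- upper bound on g j
    have hgj : g j < φstar u + ε/3 := by
      set w' := ((v':ℝ) + (u + δ'))/2 with hw'
      have hw1 : (v':ℝ) < w' := by rw [hw']; linarith
      have hw2 : w' < u + δ' := by rw [hw']; linarith
      have hwr : r j ≤ w' := by rw [hj]; exact hw1.le
      have h1 : g j ≤ φstar w' := P2 j w' hwr
      have h2 : |φstar w' - φstar u| < ε/3 := by
        have := hδprop (x := w') (by rw [Real.dist_eq, abs_lt]; constructor <;> linarith)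
        rwa [Real.dist_eq] at this
      rw [abs_lt] at h2
      linarith [h2.2]
    obtain ⟨N1, hN1⟩ := Metric.tendsto_atTop.1 (hcoord i) (ε/3) hε3
    obtain ⟨N2, hN2⟩ := Metric.tendsto_atTop.1 (hcoord j) (ε/3) hε3
    refine ⟨max N1 N2, fun n hn => ?_⟩
    have h1 := hN1 n (le_trans (le_max_left _ _) hn)
    have h2 := hN2 n (le_trans (le_max_right _ _) hn)
    rw [Real.dist_eq, abs_lt] at h1 h2
    have huIcc : u ∈ Icc (0:ℝ) 1 := ⟨hu.1.le, hu.2.le⟩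
    have hm1 : φn (σ n) (r i) ≤ φn (σ n) u :=
      (hφn (σ n)).2.1 (hr_mem i) huIcc (by rw [hi]; exact hv2.le)
    have hm2 : φn (σ n) u ≤ φn (σ n) (r j) :=
      (hφn (σ n)).2.1 huIcc (hr_mem j) (by rw [hj]; exact hv'1.le)
    rw [Real.dist_eq, abs_lt]
    constructor <;> linarith
  -- the discontinuity set
  set D : Set ℝ := {x | ¬ContinuousAt φstar x} with hD
  have hDcount : D.Countable := P1.countable_not_continuousAt
  have hDzero : volume D = 0 := hDcount.measure_zero _
  -- apply J_tendsto
  have hJconv : Tendsto (fun n => Jfun c q k (φn (σ n))) atTop (nhds (Jfun c q k φstar)) := by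
    apply J_tendsto hA1 hq k
      (ψn := fun n t => φn (σ n) (cl t)) (ψ := φstar)
      (fun n => bar_mono (hφn (σ n))) (fun n t => bar_mem (hφn (σ n)) t)
      P1 P0 hDzero
    · intro t ht htD
      have heq : (fun n => φn (σ n) (cl t)) = fun n => φn (σ n) t := by
        funext n; rw [cl_eq ⟨ht.1.le, ht.2.le⟩]
      rw [heq]
      exact P5 t ht (not_not.1 (fun h => htD h))
    · exact fun n => bar_eqOn
    · exact fun t _ => rfl
  have hJS : Tendsto (fun n => Jfun c q k (φn (σ n))) atTop (nhds S) :=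
    hJtend.comp hσ.tendsto_atTop
  have hfinal : Jfun c q k φstar = S := tendsto_nhds_unique hJconv hJS
  refine ⟨φstar, hMem, fun φ hφ => ?_⟩
  rw [hfinal]
  exact le_csSup hbdd ⟨φ, hφ, rfl⟩

end Screening
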